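/- Let c_a, c_c > 0 be constants, let r_a be an accuracy rate and r_c a cost rate, and assume that c_a·r_a''(n) + c_c·r_c''(n) > 0 for all n ∈ (0, ∞). Suppose there exists n̄ ∈ (0, ∞) such that c_a·r_a'(n̄) + c_c·r_c'(n̄) = 0. Then n̄ is the unique zero of the function n ↦ c_a·r_a'(n) + c_c·r_c'(n) on (0, ∞), and for every budget p > 2, any global minimizer n1* on [1, p−1] of the function u1(n) = (c_a·r_a(n) + c_c·r_c(n))/(p − n) satisfies n1* ≤ max{1, n̄}; in particular the minimizer is bounded from above independently of the budget p. (Proposition 3.2) -/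

import Mathlib

open Set

/-- Proposition 3.2: the stationary point `n̄` of `n ↦ cₐ·rₐ'(n) + c_c·r_c'(n)` is unique,
and for every budget `p > 2` any global minimizer of `u₁` on `[1, p−1]` is bounded above by
`max 1 n̄`, independently of `p`. -/
theorem stmt_1
    (ca cc : ℝ) (ra rc : ℝ → ℝ) (nbar : ℝ)
    (hca : 0 < ca) (hcc : 0 < cc)
    -- `ra` is an accuracy rate: positive, decreasing, twice continuously differentiable on `(0, ∞)`
    (hra_pos : ∀ x ∈ Ioi (0 : ℝ), 0 < ra x)
    (hra_anti : StrictAntiOn ra (Ioi 0))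
    (hra_smooth : ContDiffOn ℝ 2 ra (Ioi 0))
    -- `rc` is a cost rate: positive, increasing, twice continuously differentiable on `(0, ∞)`
    (hrc_pos : ∀ x ∈ Ioi (0 : ℝ), 0 < rc x)
    (hrc_mono : StrictMonoOn rc (Ioi 0))
    (hrc_smooth : ContDiffOn ℝ 2 rc (Ioi 0))
    -- strict convexity on all of `(0, ∞)`
    (hconv : ∀ n ∈ Ioi (0 : ℝ),
      0 < ca * deriv (deriv ra) n + cc * deriv (deriv rc) n)
    -- existence of a stationary point `n̄` of the numerator
    (hnbar : nbar ∈ Ioi (0 : ℝ))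
    (hstat : ca * deriv ra nbar + cc * deriv rc nbar = 0) :
    (∀ m ∈ Ioi (0 : ℝ), ca * deriv ra m + cc * deriv rc m = 0 → m = nbar) ∧
    (∀ p : ℝ, 2 < p → ∀ n₁ ∈ Icc (1 : ℝ) (p - 1),
      (∀ n ∈ Icc (1 : ℝ) (p - 1),
        (ca * ra n₁ + cc * rc n₁) / (p - n₁) ≤ (ca * ra n + cc * rc n) / (p - n)) →
      n₁ ≤ max 1 nbar) := by
  have hopen : IsOpen (Ioi (0 : ℝ)) := isOpen_Ioi
  -- differentiability facts
  have hra1 : ContDiffOn ℝ 1 (deriv ra) (Ioi 0) := by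
    have := hra_smooth.deriv_of_isOpen hopen (m := 1) (by norm_num)
    exact this
  have hrc1 : ContDiffOn ℝ 1 (deriv rc) (Ioi 0) := by
    have := hrc_smooth.deriv_of_isOpen hopen (m := 1) (by norm_num)
    exact this
  have hdra : ∀ x ∈ Ioi (0 : ℝ), DifferentiableAt ℝ ra x := fun x hx =>
    (hra_smooth.contDiffAt (hopen.mem_nhds hx)).differentiableAt (by norm_num)
  have hdrc : ∀ x ∈ Ioi (0 : ℝ), DifferentiableAt ℝ rc x := fun x hx =>
    (hrc_smooth.contDiffAt (hopen.mem_nhds hx)).differentiableAt (by norm_num)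
  have hdra' : ∀ x ∈ Ioi (0 : ℝ), DifferentiableAt ℝ (deriv ra) x := fun x hx =>
    (hra1.contDiffAt (hopen.mem_nhds hx)).differentiableAt (by norm_num)
  have hdrc' : ∀ x ∈ Ioi (0 : ℝ), DifferentiableAt ℝ (deriv rc) x := fun x hx =>
    (hrc1.contDiffAt (hopen.mem_nhds hx)).differentiableAt (by norm_num)
  set f : ℝ → ℝ := fun x => ca * deriv ra x + cc * deriv rc x with hf
  -- f is strictly monotone on Ioi 0
  have hfd : ∀ x ∈ Ioi (0 : ℝ), HasDerivAt f
      (ca * deriv (deriv ra) x + cc * deriv (deriv rc) x) x := by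
    intro x hx
    exact (((hdra' x hx).hasDerivAt.const_mul ca).add
      ((hdrc' x hx).hasDerivAt.const_mul cc))
  have hfmono : StrictMonoOn f (Ioi 0) := by
    apply strictMonoOn_of_hasDerivWithinAt_pos (convex_Ioi 0)
      (fun x hx => ((hfd x hx).continuousAt.continuousWithinAt))
      (fun x hx => ((hfd x (by rwa [interior_Ioi] at hx)).hasDerivWithinAt))
    intro x hx
    rw [interior_Ioi] at hx
    exact hconv x hx
  have huniq : ∀ m ∈ Ioi (0 : ℝ), ca * deriv ra m + cc * deriv rc m = 0 → m = nbar := by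
    intro m hm hm0
    exact hfmono.injOn hm hnbar (by simp [hf, hm0, hstat])
  refine ⟨huniq, ?_⟩
  intro p hp n₁ hn₁ hmin
  by_contra hgt
  push_neg at hgt
  set m := max 1 nbar with hm
  have hm1 : (1 : ℝ) ≤ m := le_max_left _ _
  have hm0 : 0 < m := lt_of_lt_of_le one_pos hm1
  have hmn₁ : m < n₁ := hgt
  have hmmem : m ∈ Icc (1 : ℝ) (p - 1) := ⟨hm1, le_of_lt (lt_of_lt_of_le hmn₁ hn₁.2)⟩
  -- g strictly increasing on [m, n₁]
  set g : ℝ → ℝ := fun x => ca * ra x + cc * rc x with hg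
  have hsub : Icc m n₁ ⊆ Ioi 0 := fun x hx => lt_of_lt_of_le hm0 hx.1
  have hgd : ∀ x ∈ Ioi (0 : ℝ), HasDerivAt g (f x) x := by
    intro x hx
    exact (((hdra x hx).hasDerivAt.const_mul ca).add
      ((hdrc x hx).hasDerivAt.const_mul cc))
  have hgmono : StrictMonoOn g (Icc m n₁) := by
    apply strictMonoOn_of_hasDerivWithinAt_pos (convex_Icc m n₁)
      (fun x hx => (hgd x (hsub hx)).continuousAt.continuousWithinAt)
      (fun x hx => (hgd x (hsub (interior_subset hx))).hasDerivWithinAt)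
    intro x hx
    rw [interior_Icc] at hx
    have hx0 : x ∈ Ioi (0 : ℝ) := lt_of_lt_of_le hm0 (le_of_lt hx.1)
    have : f nbar < f x := hfmono hnbar hx0 (lt_of_le_of_lt (le_max_right 1 nbar) hx.1)
    have hfnbar : f nbar = 0 := hstat
    linarith
  have hglt : g m < g n₁ :=
    hgmono ⟨le_refl m, le_of_lt hmn₁⟩ ⟨le_of_lt hmn₁, le_refl n₁⟩ hmn₁
  have hgn₁pos : 0 < g n₁ := by
    have h1 : n₁ ∈ Ioi (0 : ℝ) := lt_of_lt_of_le hm0 (le_of_lt hmn₁)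
    have := hra_pos n₁ h1
    have := hrc_pos n₁ h1
    positivity
  have hpn₁ : 0 < p - n₁ := by
    have := hn₁.2; linarith
  have hpm : 0 < p - m := by linarith
  have hdenlt : p - n₁ < p - m := by linarith
  have : g m / (p - m) < g n₁ / (p - n₁) := by
    calc g m / (p - m) < g n₁ / (p - m) := by
          exact (div_lt_div_iff_of_pos_right hpm).mpr hglt
      _ ≤ g n₁ / (p - n₁) := by
          apply div_le_div_of_nonneg_left (le_of_lt hgn₁pos) hpn₁ (le_of_lt hdenlt)
  have hle := hmin m hmmem
  simp only [hg] at this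
  linarith [hle, this]
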